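/- arXiv:1906.03622 — 3 statements merged into one kernel-verified Lean document; each statement's English description precedes it below -/
import Mathlib

section
/- Suppose a positive sequence (a_k) with A_k = a_1 + ... + a_k, A_0 = 0, satisfies a_{k+1}²/(2 A_{k+1}) ≥ 1/(2Ln) for all k ≥ 0 (with L, n > 0), where a_{k+1} is chosen as the largest root of this relation holding with equality, i.e. a_{k+1} = (1 + sqrt(1 + 4 A_k L n))/(2Ln). Then a_k ≥ k/(2Ln) and A_k ≥ (k+1)²/(4Ln) ≥ k²/(4Ln) for all k ≥ 1. -/
/-- Growth of the accumulated step sizes `A_k` in the accelerated scheme. -/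
theorem stmt3 (L : ℝ) (n : ℕ) (hL : 0 < L) (hn : 1 ≤ n)
    (a A : ℕ → ℝ)
    (hA : ∀ k : ℕ, A k = ∑ i ∈ Finset.range k, a (i + 1))
    (ha : ∀ k : ℕ,
      a (k + 1) = (1 + Real.sqrt (1 + 4 * A k * L * n)) / (2 * L * n)) :
    ∀ k : ℕ, 1 ≤ k →
      a k ≥ (k : ℝ) / (2 * L * n) ∧
      A k ≥ ((k : ℝ) + 1) ^ 2 / (4 * L * n) ∧
      ((k : ℝ) + 1) ^ 2 / (4 * L * n) ≥ (k : ℝ) ^ 2 / (4 * L * n) := by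
  have hn' : (1:ℝ) ≤ (n:ℝ) := by exact_mod_cast hn
  have hn0 : (0:ℝ) < (n:ℝ) := lt_of_lt_of_le one_pos hn'
  have hc : (0:ℝ) < L * n := mul_pos hL hn0
  have hrec : ∀ k, A (k + 1) = A k + a (k + 1) := by
    intro k; rw [hA (k + 1), hA k, Finset.sum_range_succ]
  have hA0 : A 0 = 0 := by rw [hA]; simp
  have hA1 : A 1 = 1 / (L * n) := by
    have := ha 0
    rw [hrec 0, hA0, this, hA0]
    have : Real.sqrt (1 + 4 * 0 * L * n) = 1 := by
      norm_num
    rw [this]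
    field_simp
    ring
  -- key induction: A (k+1) ≥ (k+2)²/(4Ln)
  have key : ∀ k : ℕ, A (k + 1) ≥ ((k : ℝ) + 2) ^ 2 / (4 * L * n) := by
    intro k
    induction k with
    | zero =>
      rw [hA1]
      rw [ge_iff_le, div_le_div_iff₀ (by positivity) hc]
      push_cast; ring_nf; nlinarith
    | succ m ih =>
      have hsq : ((m : ℝ) + 2) ^ 2 ≤ 1 + 4 * A (m + 1) * L * n := by
        have : ((m : ℝ) + 2) ^ 2 / (4 * L * n) * (4 * L * n) ≤ A (m + 1) * (4 * L * n) := by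
          apply mul_le_mul_of_nonneg_right ih (by positivity)
        rw [div_mul_cancel₀ _ (by positivity : (4 * L * (n:ℝ)) ≠ 0)] at this
        nlinarith
      have hsqrt : ((m : ℝ) + 2) ≤ Real.sqrt (1 + 4 * A (m + 1) * L * n) := by
        have h1 : ((m : ℝ) + 2) = Real.sqrt (((m : ℝ) + 2) ^ 2) := by
          rw [Real.sqrt_sq (by positivity)]
        rw [h1]
        exact Real.sqrt_le_sqrt hsq
      have hab : a (m + 2) ≥ ((m : ℝ) + 3) / (2 * L * n) := by
        rw [ha (m + 1)]
        apply div_le_div_of_nonneg_right ?_ (by positivity) |>.trans_eq rfl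
        linarith
      have := hrec (m + 1)
      rw [show m + 1 + 1 = m + 2 from rfl] at this
      rw [this]
      have h4 : ((m : ℝ) + 3) / (2 * L * n) = (2 * ((m:ℝ) + 3)) / (4 * L * n) := by
        rw [div_eq_div_iff (by positivity) (by positivity)]; ring
      have hgoal : (((m:ℕ):ℝ) + 1 + 2) ^ 2 / (4 * L * n) ≤
          ((m : ℝ) + 2) ^ 2 / (4 * L * n) + (2 * ((m:ℝ) + 3)) / (4 * L * n) := by
        rw [← add_div, div_le_div_iff₀ (by positivity) (by positivity)]
        push_cast; nlinarith
      push_cast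
      push_cast at hgoal
      calc ((m : ℝ) + 1 + 2) ^ 2 / (4 * L * n)
          ≤ ((m : ℝ) + 2) ^ 2 / (4 * L * n) + (2 * ((m:ℝ) + 3)) / (4 * L * n) := hgoal
        _ ≤ A (m + 1) + a (m + 2) := by
            rw [← h4]
            exact add_le_add ih hab
  -- A m ≥ m²/(4Ln) for all m
  have hAm : ∀ m : ℕ, A m ≥ (m : ℝ) ^ 2 / (4 * L * n) := by
    intro m
    cases m with
    | zero => rw [hA0]; norm_num
    | succ j =>
      refine le_trans ?_ (key j)
      apply div_le_div_of_nonneg_right ?_ (by positivity) |>.trans_eq rfl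
      push_cast; nlinarith [Nat.cast_nonneg (α := ℝ) j]
  -- a (m+1) ≥ (m+1)/(2Ln)
  have ha_bd : ∀ m : ℕ, a (m + 1) ≥ ((m : ℝ) + 1) / (2 * L * n) := by
    intro m
    rw [ha m]
    have hsq : ((m : ℝ)) ^ 2 ≤ 1 + 4 * A m * L * n := by
      have h := hAm m
      have : (m : ℝ) ^ 2 / (4 * L * n) * (4 * L * n) ≤ A m * (4 * L * n) :=
        mul_le_mul_of_nonneg_right h (by positivity)
      rw [div_mul_cancel₀ _ (by positivity : (4 * L * (n:ℝ)) ≠ 0)] at this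
      nlinarith
    have hsqrt : (m : ℝ) ≤ Real.sqrt (1 + 4 * A m * L * n) := by
      have h1 : (m : ℝ) = Real.sqrt ((m : ℝ) ^ 2) := by
        rw [Real.sqrt_sq (by positivity)]
      rw [h1]; exact Real.sqrt_le_sqrt hsq
    apply div_le_div_of_nonneg_right ?_ (by positivity) |>.trans_eq rfl
    linarith
  intro k hk
  obtain ⟨m, rfl⟩ : ∃ m, k = m + 1 := ⟨k - 1, by omega⟩
  refine ⟨?_, ?_, ?_⟩
  · have := ha_bd m
    push_cast
    refine le_trans ?_ this
    apply div_le_div_of_nonneg_right (by linarith) (by positivity)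
  · have := key m
    push_cast
    convert this using 2
    push_cast; ring
  · apply div_le_div_of_nonneg_right ?_ (by positivity)
    nlinarith [Nat.cast_nonneg (α := ℝ) (m+1)]
end

section
/- If f is γ-strongly convex on Q with respect to a norm ‖·‖_E, then the dual function φ(λ) = ⟨λ, b⟩ + max_{x∈Q}(-f(x) - ⟨Aᵀλ, x⟩) is L-smooth with L ≤ ‖A‖²_{E→H}/γ, where ‖A‖_{E→H} is the operator norm of A. -/
open scoped RealInnerProductSpace

section AuxStmt8

variable {dE dH : ℕ}

private lemma stmt8_exists_max
    (Q : Set (EuclideanSpace ℝ (Fin dE)))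
    (hQne : Q.Nonempty) (hQcl : IsClosed Q) (hQcv : Convex ℝ Q)
    (γ : ℝ) (hγ : 0 < γ)
    (g : EuclideanSpace ℝ (Fin dE) → ℝ)
    (hgc : ContinuousOn g Q)
    (hconc : ∀ x ∈ Q, ∀ y ∈ Q, ∀ a b : ℝ, 0 ≤ a → 0 ≤ b → a + b = 1 →
      a * g x + b * g y + a * b * (γ / 2 * ‖x - y‖ ^ 2) ≤ g (a • x + b • y)) :
    ∃ x, x ∈ Q ∧ ∀ y ∈ Q, g y ≤ g x := by
  obtain ⟨x0, hx0⟩ := hQne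
  -- find R such that far points have small value
  have key : ∃ R : ℝ, 1 ≤ R ∧ ∀ x ∈ Q, R < ‖x - x0‖ → g x < g x0 := by
    by_cases hS : (Q ∩ Metric.sphere x0 1).Nonempty
    · have hScpt : IsCompact (Q ∩ Metric.sphere x0 1) :=
        (isCompact_sphere x0 1).inter_left hQcl
      obtain ⟨z, hzS, hzmax⟩ := hScpt.exists_isMaxOn hS
        (hgc.mono (Set.inter_subset_left))
      obtain ⟨M, hM⟩ : ∃ M, M = g z := ⟨_, rfl⟩
      refine ⟨max 1 (1 + 2 * (|M| + |g x0| + 1) / γ), le_max_left _ _, ?_⟩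
      intro x hx hfar
      obtain ⟨t, ht⟩ : ∃ t : ℝ, t = ‖x - x0‖ := ⟨_, rfl⟩
      rw [← ht] at hfar
      have ht1 : 1 < t := lt_of_le_of_lt (le_max_left _ _) hfar
      have ht0 : 0 < t := by linarith
      have htinv : (0:ℝ) < t⁻¹ := inv_pos.2 ht0
      have htinv1 : t⁻¹ ≤ 1 := by
        rw [inv_le_one_iff₀]; right; linarith
      -- the sphere point
      set y := t⁻¹ • x + (1 - t⁻¹) • x0 with hy
      have hyQ : y ∈ Q := hQcv hx hx0 (le_of_lt htinv) (by linarith) (by ring)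
      have hysph : y ∈ Metric.sphere x0 1 := by
        have h5 : y - x0 = t⁻¹ • (x - x0) := by
          simp [hy, sub_smul, smul_sub, one_smul]; abel
        simp only [Metric.mem_sphere, dist_eq_norm, h5, norm_smul]
        rw [Real.norm_eq_abs, abs_of_pos htinv, ← ht]
        field_simp
      have hyM : g y ≤ M := by rw [hM]; exact hzmax ⟨hyQ, hysph⟩
      have hcomb := hconc x hx x0 hx0 t⁻¹ (1 - t⁻¹) (le_of_lt htinv) (by linarith) (by ring)
      rw [← hy, ← ht] at hcomb
      have hbound : t⁻¹ * g x + (1 - t⁻¹) * g x0 + t⁻¹ * (1 - t⁻¹) * (γ / 2 * t ^ 2) ≤ M :=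
        le_trans hcomb hyM
      have htR : 1 + 2 * (|M| + |g x0| + 1) / γ < t := lt_of_le_of_lt (le_max_right _ _) hfar
      have hMle : M ≤ |M| := le_abs_self M
      have hgx0 : -|g x0| ≤ g x0 := neg_abs_le _
      have hgx0' : g x0 ≤ |g x0| := le_abs_self _
      have hmul := mul_le_mul_of_nonneg_left hbound (le_of_lt ht0)
      have hexpand : t * (t⁻¹ * g x + (1 - t⁻¹) * g x0 + t⁻¹ * (1 - t⁻¹) * (γ / 2 * t ^ 2))
          = g x + (t - 1) * g x0 + γ / 2 * (t * (t - 1)) := by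
        field_simp
      rw [hexpand] at hmul
      -- hmul : g x + (t-1) * g x0 + γ/2 * (t * (t-1)) ≤ t * M
      have h4 : |M| + |g x0| + 1 < γ / 2 * (t - 1) := by
        have hγ2 : (0:ℝ) < γ / 2 := by linarith
        have h6 : 2 * (|M| + |g x0| + 1) / γ < t - 1 := by linarith
        calc |M| + |g x0| + 1 = γ / 2 * (2 * (|M| + |g x0| + 1) / γ) := by
              field_simp
        _ < γ / 2 * (t - 1) := by
              exact mul_lt_mul_of_pos_left h6 hγ2
      nlinarith [hmul, h4, ht1, hMle, hgx0, hgx0']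
    · -- Q is contained in the unit ball around x0
      refine ⟨1, le_refl _, ?_⟩
      intro x hx hfar
      exfalso
      have ht0 : (0:ℝ) < ‖x - x0‖ := by linarith
      set t := ‖x - x0‖ with ht
      have htinv : (0:ℝ) < t⁻¹ := inv_pos.2 ht0
      have htinv1 : t⁻¹ ≤ 1 := by rw [inv_le_one_iff₀]; right; linarith
      set y := t⁻¹ • x + (1 - t⁻¹) • x0 with hy
      have hyQ : y ∈ Q := hQcv hx hx0 (le_of_lt htinv) (by linarith) (by ring)
      have hysph : y ∈ Metric.sphere x0 1 := by
        have h5 : y - x0 = t⁻¹ • (x - x0) := by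
          simp [hy, sub_smul, smul_sub, one_smul]; abel
        simp only [Metric.mem_sphere, dist_eq_norm, h5, norm_smul]
        rw [Real.norm_eq_abs, abs_of_pos htinv]
        field_simp
        exact ht.symm
      exact hS ⟨y, hyQ, hysph⟩
  obtain ⟨R, hR1, hRfar⟩ := key
  -- maximize over the compact set Q ∩ closedBall x0 R
  have hKcpt : IsCompact (Q ∩ Metric.closedBall x0 R) :=
    (isCompact_closedBall x0 R).inter_left hQcl
  have hKne : (Q ∩ Metric.closedBall x0 R).Nonempty :=
    ⟨x0, hx0, Metric.mem_closedBall_self (by linarith)⟩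
  obtain ⟨xm, hxmK, hxmmax⟩ := hKcpt.exists_isMaxOn hKne
    (hgc.mono (Set.inter_subset_left))
  refine ⟨xm, hxmK.1, ?_⟩
  intro y hy
  by_cases hyb : ‖y - x0‖ ≤ R
  · exact hxmmax ⟨hy, by simpa [Metric.mem_closedBall, dist_eq_norm] using hyb⟩
  · have h1 : g y < g x0 := hRfar y hy (lt_of_not_ge hyb)
    have h2 : g x0 ≤ g xm :=
      hxmmax ⟨hx0, Metric.mem_closedBall_self (by linarith)⟩
    linarith

end AuxStmt8

/-- If `f` is `γ`-strongly convex on `Q`, then the dual objective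
`φ(λ) = ⟨λ, b⟩ + max_{x ∈ Q} (-f(x) - ⟨Aᵀλ, x⟩)` is `L`-smooth with `L ≤ ‖A‖²/γ`. -/
theorem stmt8 {dE dH : ℕ}
    (Q : Set (EuclideanSpace ℝ (Fin dE)))
    (hQne : Q.Nonempty) (hQcl : IsClosed Q) (hQcv : Convex ℝ Q)
    (f : EuclideanSpace ℝ (Fin dE) → ℝ) (γ : ℝ) (hγ : 0 < γ)
    (hf : StrongConvexOn Q γ f) (hfc : ContinuousOn f Q)
    (A : EuclideanSpace ℝ (Fin dE) →L[ℝ] EuclideanSpace ℝ (Fin dH))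
    (b : EuclideanSpace ℝ (Fin dH))
    (φ : EuclideanSpace ℝ (Fin dH) → ℝ)
    (hφ : ∀ lam, φ lam = ⟪lam, b⟫ + sSup ((fun x => -f x - ⟪lam, A x⟫) '' Q)) :
    Differentiable ℝ φ ∧
      ∀ l1 l2, ‖gradient φ l1 - gradient φ l2‖ ≤ (‖A‖ ^ 2 / γ) * ‖l1 - l2‖ := by
  classical
  set g : EuclideanSpace ℝ (Fin dH) → EuclideanSpace ℝ (Fin dE) → ℝ :=
    fun lam x => -f x - ⟪lam, A x⟫ with hg
  have hgcont : ∀ lam, ContinuousOn (g lam) Q := by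
    intro lam
    exact hfc.neg.sub ((continuous_const.inner A.continuous).continuousOn)
  have hconc : ∀ lam, ∀ x ∈ Q, ∀ y ∈ Q, ∀ a b' : ℝ, 0 ≤ a → 0 ≤ b' → a + b' = 1 →
      a * g lam x + b' * g lam y + a * b' * (γ / 2 * ‖x - y‖ ^ 2) ≤ g lam (a • x + b' • y) := by
    intro lam x hx y hy a b' ha hb hab
    have h1 := hf.2 hx hy ha hb hab
    simp only [smul_eq_mul] at h1
    have h2 : ⟪lam, A (a • x + b' • y)⟫ = a * ⟪lam, A x⟫ + b' * ⟪lam, A y⟫ := by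
      rw [map_add, map_smul, map_smul, inner_add_right, real_inner_smul_right,
        real_inner_smul_right]
    simp only [hg, h2]
    nlinarith [h1]
  have hex : ∀ lam, ∃ x, x ∈ Q ∧ ∀ y ∈ Q, g lam y ≤ g lam x := fun lam =>
    stmt8_exists_max Q hQne hQcl hQcv γ hγ (g lam) (hgcont lam) (hconc lam)
  choose xs hxsQ hxsmax using hex
  have hφ' : ∀ lam, φ lam = ⟪lam, b⟫ + g lam (xs lam) := by
    intro lam
    rw [hφ lam]
    congr 1
    apply IsGreatest.csSup_eq
    constructor
    · exact ⟨xs lam, hxsQ lam, rfl⟩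
    · rintro r ⟨y, hy, rfl⟩
      exact hxsmax lam y hy
  have hginner : ∀ l m : EuclideanSpace ℝ (Fin dH), ∀ x,
      g m x = g l x - ⟪m - l, A x⟫ := by
    intro l m x
    simp only [hg, inner_sub_left]
    ring
  clear_value g
  clear hg hφ hfc hf
  have hbinner : ∀ l m : EuclideanSpace ℝ (Fin dH),
      ⟪m, b⟫ - ⟪l, b⟫ = ⟪m - l, b⟫ := by
    intro l m; rw [inner_sub_left]
  -- strong optimality at the maximizer
  have hopt : ∀ lam, ∀ y ∈ Q, g lam y + γ / 2 * ‖y - xs lam‖ ^ 2 ≤ g lam (xs lam) := by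
    intro lam y hy
    obtain ⟨c, hc⟩ : ∃ c, c = γ / 2 * ‖y - xs lam‖ ^ 2 := ⟨_, rfl⟩
    rw [← hc]
    have hc0 : 0 ≤ c := by rw [hc]; positivity
    have hstep : ∀ t : ℝ, 0 < t → t < 1 → g lam y + c ≤ g lam (xs lam) + t * c := by
      intro t ht0 ht1
      have hcomb := hconc lam y hy (xs lam) (hxsQ lam) t (1 - t) (le_of_lt ht0)
        (by linarith) (by ring)
      have hin : t • y + (1 - t) • xs lam ∈ Q :=
        hQcv hy (hxsQ lam) (le_of_lt ht0) (by linarith) (by ring)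
      have hle := hxsmax lam _ hin
      rw [← hc] at hcomb
      nlinarith [hcomb, hle]
    refine le_of_forall_pos_le_add ?_
    intro ε hε
    rcases le_or_gt c ε with hce | hce
    · have h7 := hstep (1/2) (by norm_num) (by norm_num)
      linarith
    · have hcpos : 0 < c := lt_trans hε hce
      have h7 := hstep (ε / c) (div_pos hε hcpos) ((div_lt_one hcpos).2 hce)
      rw [div_mul_cancel₀ _ (ne_of_gt hcpos)] at h7
      linarith
  set G : EuclideanSpace ℝ (Fin dH) → EuclideanSpace ℝ (Fin dH) :=
    fun lam => b - A (xs lam) with hG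
  have hGinner : ∀ l m : EuclideanSpace ℝ (Fin dH),
      ⟪m - l, G m⟫ = ⟪m - l, b⟫ - ⟪m - l, A (xs m)⟫ := by
    intro l m; simp only [hG, inner_sub_right]
  have hGdiff : ∀ l m : EuclideanSpace ℝ (Fin dH), G l - G m = A (xs m - xs l) := by
    intro l m; simp only [hG, map_sub]; abel
  clear_value G
  clear hG
  have hlow : ∀ l m, φ l + ⟪m - l, G l⟫ ≤ φ m := by
    intro l m
    have h1 : ⟪m, b⟫ + g m (xs l) ≤ φ m := by
      rw [hφ' m]
      have := hxsmax m (xs l) (hxsQ l)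
      linarith
    rw [hφ' l]
    have h2 := hginner l m (xs l)
    have h3 := hbinner l m
    have h4 := hGinner l l
    -- hGinner gives for pair (l, l)? need (·, l): use hGinner with m := l and l := m? define directly:
    have h4' : ⟪m - l, G l⟫ = ⟪m - l, b⟫ - ⟪m - l, A (xs l)⟫ := by
      have h5 : G l - G m = A (xs m - xs l) := hGdiff l m
      -- direct: use hGinner with swapped arguments
      have := hGinner m l
      -- this : ⟪l - m, G l⟫ = ⟪l - m, b⟫ - ⟪l - m, A (xs l)⟫
      have hneg : (m - l : EuclideanSpace ℝ (Fin dH)) = -(l - m) := by abel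
      rw [hneg, inner_neg_left, inner_neg_left, inner_neg_left, this]
      ring
    linarith
  have hupp : ∀ l m, φ m ≤ φ l + ⟪m - l, G m⟫ - γ / 2 * ‖xs m - xs l‖ ^ 2 := by
    intro l m
    rw [hφ' m, hφ' l]
    have h2 := hginner l m (xs m)
    have h3 := hbinner l m
    have h4 := hGinner l m
    have h5 := hopt l (xs m) (hxsQ m)
    linarith
  -- Lipschitz continuity of the maximizer
  have hxsLip : ∀ l m, γ * ‖xs m - xs l‖ ≤ ‖A‖ * ‖m - l‖ := by
    intro l m
    have h1 := hupp l m
    have h2 := hupp m l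
    have hnrev : ‖xs l - xs m‖ = ‖xs m - xs l‖ := norm_sub_rev _ _
    rw [hnrev] at h2
    have hsum : γ * ‖xs m - xs l‖ ^ 2 ≤ ⟪m - l, G m⟫ + ⟪l - m, G l⟫ := by linarith
    have hGd : ⟪m - l, G m⟫ + ⟪l - m, G l⟫ = ⟪m - l, A (xs l - xs m)⟫ := by
      have hneg : (l - m : EuclideanSpace ℝ (Fin dH)) = -(m - l) := by abel
      rw [hneg, inner_neg_left, ← hGdiff m l, inner_sub_right]
      ring
    rw [hGd] at hsum
    have hCS : ⟪m - l, A (xs l - xs m)⟫ ≤ ‖m - l‖ * ‖A (xs l - xs m)‖ :=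
      real_inner_le_norm _ _
    have hop : ‖A (xs l - xs m)‖ ≤ ‖A‖ * ‖xs l - xs m‖ := A.le_opNorm _
    rw [hnrev] at hop
    rcases eq_or_lt_of_le (norm_nonneg (xs m - xs l)) with h0 | h0
    · rw [← h0, mul_zero]
      positivity
    · have hprod := mul_le_mul_of_nonneg_left hop (norm_nonneg (m - l))
      nlinarith [hsum, hCS, hprod, h0]
  have hGLip : ∀ l m, ‖G l - G m‖ ≤ ‖A‖ ^ 2 / γ * ‖l - m‖ := by
    intro l m
    rw [hGdiff l m]
    have h2 : ‖A (xs m - xs l)‖ ≤ ‖A‖ * ‖xs m - xs l‖ := A.le_opNorm _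
    have h3 := hxsLip l m
    have hnrev : ‖m - l‖ = ‖l - m‖ := norm_sub_rev _ _
    rw [hnrev] at h3
    have hA0 : (0:ℝ) ≤ ‖A‖ := norm_nonneg _
    calc ‖A (xs m - xs l)‖ ≤ ‖A‖ * ‖xs m - xs l‖ := h2
    _ ≤ ‖A‖ * (‖A‖ * ‖l - m‖ / γ) := by
        apply mul_le_mul_of_nonneg_left _ hA0
        rw [le_div_iff₀ hγ]
        linarith [h3]
    _ = ‖A‖ ^ 2 / γ * ‖l - m‖ := by ring
  -- differentiability with gradient G
  have hgrad : ∀ l, HasGradientAt φ (G l) l := by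
    intro l
    show HasGradientAtFilter φ (G l) l (nhds l)
    rw [hasGradientAtFilter_iff_isLittleO, Asymptotics.isLittleO_iff]
    intro c hc
    have hL0 : (0:ℝ) ≤ ‖A‖ ^ 2 / γ := by positivity
    have hkey : ∀ m, |φ m - φ l - ⟪G l, m - l⟫| ≤ ‖A‖ ^ 2 / γ * ‖m - l‖ ^ 2 := by
      intro m
      have h1 := hlow l m
      have h2 := hupp l m
      have hcomm : ⟪G l, m - l⟫ = ⟪m - l, G l⟫ := real_inner_comm _ _
      have hsq : (0:ℝ) ≤ γ / 2 * ‖xs m - xs l‖ ^ 2 := by positivity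
      have hd : ⟪m - l, G m - G l⟫ = ⟪m - l, G m⟫ - ⟪m - l, G l⟫ := inner_sub_right _ _ _
      have h3 : φ m - φ l - ⟪G l, m - l⟫ ≤ ⟪m - l, G m - G l⟫ := by
        rw [hcomm, hd]; linarith
      have h4 : 0 ≤ φ m - φ l - ⟪G l, m - l⟫ := by rw [hcomm]; linarith
      have h5 : ⟪m - l, G m - G l⟫ ≤ ‖m - l‖ * ‖G m - G l‖ := real_inner_le_norm _ _
      have h6 : ‖G m - G l‖ ≤ ‖A‖ ^ 2 / γ * ‖m - l‖ := hGLip m l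
      rw [abs_of_nonneg h4]
      calc φ m - φ l - ⟪G l, m - l⟫ ≤ ‖m - l‖ * ‖G m - G l‖ := le_trans h3 h5
      _ ≤ ‖m - l‖ * (‖A‖ ^ 2 / γ * ‖m - l‖) :=
          mul_le_mul_of_nonneg_left h6 (norm_nonneg _)
      _ = ‖A‖ ^ 2 / γ * ‖m - l‖ ^ 2 := by ring
    have hev : ∀ᶠ m in nhds l, ‖m - l‖ ≤ c / (‖A‖ ^ 2 / γ + 1) := by
      have hball : Metric.closedBall l (c / (‖A‖ ^ 2 / γ + 1)) ∈ nhds l :=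
        Metric.closedBall_mem_nhds l (by positivity)
      filter_upwards [hball] with m hm
      simpa [Metric.mem_closedBall, dist_eq_norm] using hm
    filter_upwards [hev] with m hm
    rw [Real.norm_eq_abs]
    have h0 : (0:ℝ) ≤ ‖m - l‖ := norm_nonneg _
    have hstep : ‖A‖ ^ 2 / γ * ‖m - l‖ ≤ c := by
      have h8 : ‖A‖ ^ 2 / γ * ‖m - l‖ ≤ ‖A‖ ^ 2 / γ * (c / (‖A‖ ^ 2 / γ + 1)) :=
        mul_le_mul_of_nonneg_left hm hL0
      have h9 : ‖A‖ ^ 2 / γ * (c / (‖A‖ ^ 2 / γ + 1)) ≤ c := by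
        rw [mul_div_assoc', div_le_iff₀ (by linarith : (0:ℝ) < ‖A‖ ^ 2 / γ + 1)]
        nlinarith [hc.le, hL0]
      linarith
    calc |φ m - φ l - ⟪G l, m - l⟫| ≤ ‖A‖ ^ 2 / γ * ‖m - l‖ ^ 2 := hkey m
    _ = (‖A‖ ^ 2 / γ * ‖m - l‖) * ‖m - l‖ := by ring
    _ ≤ c * ‖m - l‖ := mul_le_mul_of_nonneg_right hstep h0
  refine ⟨fun l => (hgrad l).differentiableAt, fun l1 l2 => ?_⟩
  rw [(hgrad l1).gradient, (hgrad l2).gradient]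
  exact hGLip l1 l2
end

section
/- Let (u*, v*) be a stationary point of φ(u,v) = γ(ln(𝟏ᵀB(u,v)𝟏) - ⟨u, r⟩ - ⟨v, c⟩) with B(u,v)_{ij} = exp(u_i + v_j - C_{ij}/γ), 0 ≤ C_{ij} ≤ ‖C‖_∞, and r strictly positive summing to 1. Then max_i u*_i - min_i u*_i ≤ ‖C‖_∞/γ - ln(min_i r_i). -/
open scoped BigOperators

/-- The entropic OT kernel matrix `B(u,v)_{ij} = exp(u_i + v_j - C_{ij}/γ)`. -/
noncomputable def Bmat {N : ℕ} (γ : ℝ) (C : Matrix (Fin N) (Fin N) ℝ)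
    (u v : Fin N → ℝ) : Matrix (Fin N) (Fin N) ℝ :=
  fun i j => Real.exp (u i + v j - C i j / γ)

/-- At a stationary point of the dual entropic OT objective, the oscillation of the `u`
variables is bounded: `max u - min u ≤ ‖C‖∞/γ - ln(min_i r_i)`. -/
theorem stmt14 {N : ℕ} (hN : 1 ≤ N) (γ : ℝ) (hγ : 0 < γ)
    (C : Matrix (Fin N) (Fin N) ℝ) (Cmax : ℝ)
    (hC0 : ∀ i j, 0 ≤ C i j) (hCmax : ∀ i j, C i j ≤ Cmax)
    (r : Fin N → ℝ) (rmin : ℝ) (hrmin : 0 < rmin) (hrle : ∀ i, rmin ≤ r i)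
    (hr1 : ∑ i, r i = 1)
    (u v : Fin N → ℝ)
    (hstat : ∀ i : Fin N,
      r i = (∑ j, Bmat γ C u v i j) / (∑ i', ∑ j, Bmat γ C u v i' j)) :
    ∀ i i' : Fin N, u i - u i' ≤ Cmax / γ - Real.log rmin := by
  intro i i'
  haveI : NeZero N := ⟨by omega⟩
  set A : Fin N → ℝ := fun k => ∑ j, Real.exp (v j - C k j / γ) with hA
  have hApos : ∀ k, 0 < A k := fun k =>
    Finset.sum_pos (fun j _ => Real.exp_pos _) Finset.univ_nonempty
  set S : ℝ := ∑ i', ∑ j, Bmat γ C u v i' j with hS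
  have hSpos : 0 < S :=
    Finset.sum_pos (fun k _ => Finset.sum_pos (fun j _ => Real.exp_pos _)
      Finset.univ_nonempty) Finset.univ_nonempty
  have hrow : ∀ k, ∑ j, Bmat γ C u v k j = Real.exp (u k) * A k := by
    intro k
    simp only [Bmat, hA, Finset.mul_sum]
    refine Finset.sum_congr rfl fun j _ => ?_
    rw [← Real.exp_add]
    ring_nf
  have heq : ∀ k, Real.exp (u k) * A k = r k * S := by
    intro k
    have := hstat k
    rw [hrow k] at this
    field_simp at this
    linarith [this]
  -- A i' ≤ exp(Cmax/γ) * A i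
  have hAle : A i' ≤ Real.exp (Cmax / γ) * A i := by
    rw [hA, Finset.mul_sum]
    refine Finset.sum_le_sum fun j _ => ?_
    rw [← Real.exp_add]
    apply Real.exp_le_exp.mpr
    have h1 : C i j / γ ≤ Cmax / γ := by gcongr; exact hCmax i j
    have h2 : 0 ≤ C i' j / γ := div_nonneg (hC0 i' j) hγ.le
    linarith
  have hri1 : r i ≤ 1 := by
    rw [← hr1]
    exact Finset.single_le_sum (fun k _ => le_trans hrmin.le (hrle k)) (Finset.mem_univ i)
  have key : Real.exp (u i) * A i * r i' = Real.exp (u i') * A i' * r i := by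
    rw [heq i, heq i']; ring
  have hri'pos : 0 < r i' := lt_of_lt_of_le hrmin (hrle i')
  have h1 : rmin * (Real.exp (u i) * A i) ≤ Real.exp (u i') * A i' * r i := by
    rw [← key]
    nlinarith [mul_pos (Real.exp_pos (u i)) (hApos i), hrle i']
  have h2 : Real.exp (u i') * A i' * r i ≤ Real.exp (u i') * Real.exp (Cmax / γ) * A i := by
    nlinarith [mul_le_mul_of_nonneg_left hAle (Real.exp_pos (u i')).le,
      mul_le_mul_of_nonneg_left hri1 (mul_pos (Real.exp_pos (u i')) (hApos i')).le,
      mul_pos (Real.exp_pos (u i')) (hApos i')]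
  have hexp : Real.exp (u i) ≤ Real.exp (u i' + Cmax / γ) / rmin := by
    rw [le_div_iff₀ hrmin, Real.exp_add]
    have h3 : rmin * Real.exp (u i) * A i ≤ Real.exp (u i') * Real.exp (Cmax / γ) * A i := by
      linarith [h1, h2]
    have := (mul_le_mul_iff_of_pos_right (hApos i)).mp h3
    linarith
  have := Real.log_le_log (Real.exp_pos _) hexp
  rw [Real.log_exp, Real.log_div (Real.exp_ne_zero _) (ne_of_gt hrmin), Real.log_exp] at this
  linarith
end
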